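/- For all T₁, T₂ ∈ B_A(H), one has ‖T₁^{#_A} T₂‖_A = ‖T₂^{#_A} T₁‖_A. -/

import Mathlib

noncomputable section

open ContinuousLinearMap

/-- The semi-inner product induced by a positive operator `A`: `⟪x, y⟫_A = ⟪A x, y⟫`. -/
def sInnerA {E : Type*} [NormedAddCommGroup E] [InnerProductSpace ℂ E]
    (A : E →L[ℂ] E) (x y : E) : ℂ :=
  inner ℂ (A x) y

/-- The seminorm induced by `A`: `‖x‖_A = √(re ⟪A x, x⟫)`. -/
def sNormA {E : Type*} [NormedAddCommGroup E] [InnerProductSpace ℂ E]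
    (A : E →L[ℂ] E) (x : E) : ℝ :=
  Real.sqrt (sInnerA A x x).re

/-- The `A`-operator seminorm: `sup {‖T x‖_A : x ∈ closure (range A), ‖x‖_A = 1}`. -/
def opNormA {E : Type*} [NormedAddCommGroup E] [InnerProductSpace ℂ E]
    (A T : E →L[ℂ] E) : ℝ :=
  sSup {r | ∃ x ∈ closure (Set.range A), sNormA A x = 1 ∧ r = sNormA A (T x)}

/-- The `A`-numerical radius: `sup {|⟪T x, x⟫_A| : ‖x‖_A = 1}`. -/
def wA {E : Type*} [NormedAddCommGroup E] [InnerProductSpace ℂ E]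
    (A T : E →L[ℂ] E) : ℝ :=
  sSup {r | ∃ x, sNormA A x = 1 ∧ r = ‖sInnerA A (T x) x‖}

/-- The `A`-Crawford number: `inf {|⟪T x, x⟫_A| : ‖x‖_A = 1}`. -/
def cA {E : Type*} [NormedAddCommGroup E] [InnerProductSpace ℂ E]
    (A T : E →L[ℂ] E) : ℝ :=
  sInf {r | ∃ x, sNormA A x = 1 ∧ r = ‖sInnerA A (T x) x‖}

/-- `T ∈ B_A(H)`, i.e. the range of `T* A` is contained in the range of `A`. -/
def memBA {E : Type*} [NormedAddCommGroup E] [InnerProductSpace ℂ E] [CompleteSpace E]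
    (A T : E →L[ℂ] E) : Prop :=
  Set.range ((adjoint T) ∘L A) ⊆ Set.range A

/-- `S` is the distinguished `A`-adjoint `T^{#_A}` of `T`:
`A ∘ S = T* ∘ A` and `R(S) ⊆ closure (R(A))`. -/
def IsSharpA {E : Type*} [NormedAddCommGroup E] [InnerProductSpace ℂ E] [CompleteSpace E]
    (A T S : E →L[ℂ] E) : Prop :=
  A ∘L S = (adjoint T) ∘L A ∧ Set.range S ⊆ closure (Set.range A)

/-- The `2 × 2` operator matrix `[[X, Y], [Z, W]]` acting blockwise on
the Hilbert space direct sum `H ⊕ H`. -/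
def blk2 {H : Type*} [NormedAddCommGroup H] [InnerProductSpace ℂ H]
    (X Y Z W : H →L[ℂ] H) : WithLp 2 (H × H) →L[ℂ] WithLp 2 (H × H) :=
  ((WithLp.prodContinuousLinearEquiv 2 ℂ H H).symm : (H × H) →L[ℂ] WithLp 2 (H × H)) ∘L
    ((X ∘L ContinuousLinearMap.fst ℂ H H + Y ∘L ContinuousLinearMap.snd ℂ H H).prod
      (Z ∘L ContinuousLinearMap.fst ℂ H H + W ∘L ContinuousLinearMap.snd ℂ H H)) ∘L
    ((WithLp.prodContinuousLinearEquiv 2 ℂ H H) : WithLp 2 (H × H) →L[ℂ] H × H)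

namespace Stmt19Aux

variable {E : Type*} [NormedAddCommGroup E] [InnerProductSpace ℂ E]

lemma sNormA_nonneg (A : E →L[ℂ] E) (x : E) : 0 ≤ sNormA A x := Real.sqrt_nonneg _

variable [CompleteSpace E]

lemma re_sInnerA_self_nonneg {A : E →L[ℂ] E} (hA : A.IsPositive) (x : E) :
    0 ≤ (sInnerA A x x).re := by
  simpa [sInnerA, ContinuousLinearMap.reApplyInnerSelf] using hA.re_inner_nonneg_left x

lemma sq_sNormA {A : E →L[ℂ] E} (hA : A.IsPositive) (x : E) :
    sNormA A x ^ 2 = (sInnerA A x x).re :=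
  Real.sq_sqrt (re_sInnerA_self_nonneg hA x)

def coreA {A : E →L[ℂ] E} (hA : A.IsPositive) : PreInnerProductSpace.Core ℂ E where
  inner x y := sInnerA A x y
  conj_inner_symm x y := by
    have hsymm := (ContinuousLinearMap.isSelfAdjoint_iff_isSymmetric).mp hA.isSelfAdjoint
    simp only [sInnerA]
    rw [inner_conj_symm]; exact (hsymm x y).symm
  re_inner_nonneg x := by
    simpa using re_sInnerA_self_nonneg hA x
  add_left x y z := by simp [sInnerA, inner_add_left]
  smul_left x y r := by simp [sInnerA, inner_smul_left, mul_comm]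

lemma abs_sInnerA_le {A : E →L[ℂ] E} (hA : A.IsPositive) (x y : E) :
    ‖sInnerA A x y‖ ≤ sNormA A x * sNormA A y := by
  letI c := coreA hA
  have h := InnerProductSpace.Core.inner_mul_inner_self_le (𝕜 := ℂ) (F := E) x y
  have h' : ‖sInnerA A x y‖ * ‖sInnerA A y x‖
      ≤ (sInnerA A x x).re * (sInnerA A y y).re := h
  have habs : ‖sInnerA A y x‖ = ‖sInnerA A x y‖ := by
    have := c.conj_inner_symm x y
    have h2 : (starRingEnd ℂ) (sInnerA A y x) = sInnerA A x y := this
    rw [← h2, Complex.norm_conj]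
  rw [habs] at h'
  have hx := sNormA_nonneg A x
  have hy := sNormA_nonneg A y
  have h3 : ‖sInnerA A x y‖ * ‖sInnerA A x y‖
      ≤ (sNormA A x * sNormA A y) ^ 2 := by
    rw [mul_pow, sq_sNormA hA, sq_sNormA hA]; exact h'
  nlinarith [norm_nonneg (sInnerA A x y), mul_nonneg hx hy]

end Stmt19Aux

namespace Stmt19Aux

variable {E : Type*} [NormedAddCommGroup E] [InnerProductSpace ℂ E]

lemma sNormA_smul (A : E →L[ℂ] E) (c : ℂ) (x : E) :
    sNormA A (c • x) = ‖c‖ * sNormA A x := by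
  unfold sNormA sInnerA
  rw [map_smul, inner_smul_left, inner_smul_right, ← mul_assoc]
  have h1 : (starRingEnd ℂ) c * c = ((Complex.normSq c : ℝ) : ℂ) := by
    rw [mul_comm, Complex.mul_conj]
  rw [h1, Complex.re_ofReal_mul, Real.sqrt_mul (Complex.normSq_nonneg c),
    ← Complex.norm_def]

lemma smul_mem_closureRange (A : E →L[ℂ] E) (c : ℂ) {x : E}
    (hx : x ∈ closure (Set.range A)) : c • x ∈ closure (Set.range A) := by
  refine map_mem_closure (continuous_const_smul c) hx ?_
  rintro _ ⟨z, rfl⟩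
  exact ⟨c • z, map_smul A c z⟩

lemma sSup_eq_of_cofinal {s t : Set ℝ} (h1 : ∀ a ∈ s, ∃ b ∈ t, a ≤ b)
    (h2 : ∀ b ∈ t, ∃ a ∈ s, b ≤ a) : sSup s = sSup t := by
  rcases s.eq_empty_or_nonempty with hs | hs
  · rcases t.eq_empty_or_nonempty with ht | ht
    · rw [hs, ht]
    · obtain ⟨b, hb⟩ := ht
      obtain ⟨a, ha, -⟩ := h2 b hb
      rw [hs] at ha
      exact absurd ha (Set.notMem_empty a)
  · have ht : t.Nonempty := by
      obtain ⟨a, ha⟩ := hs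
      obtain ⟨b, hb, -⟩ := h1 a ha
      exact ⟨b, hb⟩
    by_cases hbt : BddAbove t
    · have hbs : BddAbove s := by
        obtain ⟨u, hu⟩ := hbt
        exact ⟨u, fun a ha => by
          obtain ⟨b, hb, hab⟩ := h1 a ha; exact hab.trans (hu hb)⟩
      refine le_antisymm (csSup_le hs fun a ha => ?_) (csSup_le ht fun b hb => ?_)
      · obtain ⟨b, hb, hab⟩ := h1 a ha
        exact hab.trans (le_csSup hbt hb)
      · obtain ⟨a, ha, hba⟩ := h2 b hb
        exact hba.trans (le_csSup hbs ha)
    · have hbs : ¬ BddAbove s := by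
        rintro ⟨u, hu⟩
        exact hbt ⟨u, fun b hb => by
          obtain ⟨a, ha, hba⟩ := h2 b hb; exact hba.trans (hu ha)⟩
      rw [csSup_of_not_bddAbove hbs, csSup_of_not_bddAbove hbt]

variable [CompleteSpace E]

/-- `opNormA` as a double supremum of `|⟪S x, y⟫_A|`. -/
lemma opNormA_eq_sSup_double {A : E →L[ℂ] E} (hA : A.IsPositive) (S : E →L[ℂ] E)
    (hS : Set.range S ⊆ closure (Set.range A)) :
    opNormA A S = sSup {r | ∃ x ∈ closure (Set.range A), ∃ y ∈ closure (Set.range A),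
      sNormA A x = 1 ∧ sNormA A y = 1 ∧ r = ‖sInnerA A (S x) y‖} := by
  apply sSup_eq_of_cofinal
  · rintro a ⟨x, hx, hx1, rfl⟩
    by_cases h : sNormA A (S x) = 0
    · refine ⟨‖sInnerA A (S x) x‖, ⟨x, hx, x, hx, hx1, hx1, rfl⟩, ?_⟩
      rw [h]; exact norm_nonneg _
    · have hpos : 0 < sNormA A (S x) := lt_of_le_of_ne (sNormA_nonneg A (S x)) (Ne.symm h)
      set n := sNormA A (S x) with hn
      refine ⟨‖sInnerA A (S x) (((n : ℂ))⁻¹ • S x)‖,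
        ⟨x, hx, ((n : ℂ))⁻¹ • S x, smul_mem_closureRange A _ (hS ⟨x, rfl⟩), hx1, ?_, rfl⟩, ?_⟩
      · rw [sNormA_smul, norm_inv, Complex.norm_real, Real.norm_eq_abs, abs_of_pos hpos, ← hn]
        exact inv_mul_cancel₀ h
      · have : sInnerA A (S x) (((n : ℂ))⁻¹ • S x) = ((n : ℂ))⁻¹ * sInnerA A (S x) (S x) := by
          unfold sInnerA; rw [inner_smul_right]
        rw [this, norm_mul, norm_inv, Complex.norm_real, Real.norm_eq_abs, abs_of_pos hpos]
        have hre : n ^ 2 ≤ ‖sInnerA A (S x) (S x)‖ := by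
          rw [hn, sq_sNormA hA]
          exact Complex.re_le_norm _
        calc n = n⁻¹ * n ^ 2 := by field_simp [sq]
        _ ≤ n⁻¹ * ‖sInnerA A (S x) (S x)‖ := by
            exact mul_le_mul_of_nonneg_left hre (inv_nonneg.mpr hpos.le)
  · rintro b ⟨x, hx, y, hy, hx1, hy1, rfl⟩
    refine ⟨sNormA A (S x), ⟨x, hx, hx1, rfl⟩, ?_⟩
    have := abs_sInnerA_le hA (S x) y
    rwa [hy1, mul_one] at this

end Stmt19Aux

theorem stmt19' {H : Type*} [NormedAddCommGroup H] [InnerProductSpace ℂ H] [CompleteSpace H]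
    (A : H →L[ℂ] H) (hA : A.IsPositive)
    (T₁ T₂ T₁s T₂s : H →L[ℂ] H)
    (hT₁s : A ∘L T₁s = (adjoint T₁) ∘L A ∧ Set.range T₁s ⊆ closure (Set.range A))
    (hT₂s : A ∘L T₂s = (adjoint T₂) ∘L A ∧ Set.range T₂s ⊆ closure (Set.range A)) :
    opNormA A (T₁s ∘L T₂) = opNormA A (T₂s ∘L T₁) := by
  have hS : Set.range ⇑(T₁s ∘L T₂) ⊆ closure (Set.range ⇑A) := by
    rintro _ ⟨x, rfl⟩; exact hT₁s.2 ⟨T₂ x, rfl⟩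
  have hS' : Set.range ⇑(T₂s ∘L T₁) ⊆ closure (Set.range ⇑A) := by
    rintro _ ⟨x, rfl⟩; exact hT₂s.2 ⟨T₁ x, rfl⟩
  rw [Stmt19Aux.opNormA_eq_sSup_double hA _ hS, Stmt19Aux.opNormA_eq_sSup_double hA _ hS']
  congr 1
  have hsymm := (ContinuousLinearMap.isSelfAdjoint_iff_isSymmetric).mp hA.isSelfAdjoint
  have key : ∀ x y : H, ‖sInnerA A ((T₁s ∘L T₂) x) y‖
      = ‖sInnerA A ((T₂s ∘L T₁) y) x‖ := by
    intro x y
    have e1 : A ((T₁s ∘L T₂) x) = adjoint T₁ (A (T₂ x)) := by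
      have := congrArg (fun f : H →L[ℂ] H => f (T₂ x)) hT₁s.1
      simpa using this
    have e2 : A ((T₂s ∘L T₁) y) = adjoint T₂ (A (T₁ y)) := by
      have := congrArg (fun f : H →L[ℂ] H => f (T₁ y)) hT₂s.1
      simpa using this
    unfold sInnerA
    rw [e1, e2, adjoint_inner_left, adjoint_inner_left]
    have h3 : (inner ℂ (A (T₂ x)) (T₁ y) : ℂ) = (starRingEnd ℂ) (inner ℂ (A (T₁ y)) (T₂ x)) := by
      rw [inner_conj_symm]; exact hsymm (T₂ x) (T₁ y)
    rw [h3, Complex.norm_conj]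
  ext r
  constructor
  · rintro ⟨x, hx, y, hy, hx1, hy1, rfl⟩
    exact ⟨y, hy, x, hx, hy1, hx1, key x y⟩
  · rintro ⟨y, hy, x, hx, hy1, hx1, rfl⟩
    exact ⟨x, hx, y, hy, hx1, hy1, (key x y).symm⟩


theorem stmt19 {H : Type*} [NormedAddCommGroup H] [InnerProductSpace ℂ H] [CompleteSpace H]
    (A : H →L[ℂ] H) (hA : A.IsPositive)
    (T₁ T₂ T₁s T₂s : H →L[ℂ] H) (hT₁ : memBA A T₁) (hT₂ : memBA A T₂)
    (hT₁s : IsSharpA A T₁ T₁s) (hT₂s : IsSharpA A T₂ T₂s) :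
    opNormA A (T₁s ∘L T₂) = opNormA A (T₂s ∘L T₁) :=
  stmt19' A hA T₁ T₂ T₁s T₂s hT₁s hT₂s
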